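/- If u : ℤ → ℝ is strictly monotone and satisfies the K=4 cross-ratio scheme, then J₂(m) = 4·u(m+2)/(u(m+2)-u(m)) - u(m+1)/(u(m+2)-u(m+1)) - u(m+1)/(u(m+1)-u(m)) - 2 is independent of m. -/

import Mathlib

theorem stmt_12 (u : ℤ → ℝ) (hmono : StrictMono u)
    (hscheme : ∀ m : ℤ, (u (m + 3) - u (m + 1)) * (u (m + 2) - u m)
      = 4 * ((u (m + 3) - u (m + 2)) * (u (m + 1) - u m)))
    (J₂ : ℤ → ℝ)
    (hJ₂ : ∀ m : ℤ, J₂ m = 4 * u (m + 2) / (u (m + 2) - u m)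
      - u (m + 1) / (u (m + 2) - u (m + 1))
      - u (m + 1) / (u (m + 1) - u m) - 2) :
    ∀ m : ℤ, J₂ (m + 1) = J₂ m := by
  intro m
  have e1 : m + 1 + 2 = m + 3 := by ring
  have e2 : m + 1 + 1 = m + 2 := by ring
  rw [hJ₂, hJ₂, e1, e2]
  set a := u m with ha
  set b := u (m + 1) with hb
  set c := u (m + 2) with hc
  set d := u (m + 3) with hd
  have hs := hscheme m
  rw [← ha, ← hb, ← hc, ← hd] at hs
  have hba : a < b := hmono (by linarith)
  have hcb : b < c := hmono (by linarith)
  have hdc : c < d := hmono (by linarith)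
  have h1 : b - a ≠ 0 := by linarith
  have h2 : c - b ≠ 0 := by linarith
  have h3 : d - c ≠ 0 := by linarith
  have h4 : c - a ≠ 0 := by linarith
  have h5 : d - b ≠ 0 := by linarith
  field_simp
  linear_combination ((c - b) * (a * d - b * c)) * hs
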